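/- Let μ ∈ (0, 1/10), ε > 0, R > 0, C > 0, and let u : [2,∞) × ℝ² → ℂ satisfy u(t,x) = 0 for |x| ≥ t + R and the pointwise bound |∇_{t,x}u(t,x)| ≤ C t^{-1/2} min{(log t)^{-1/2}, ε⟨t-|x|⟩^{μ-1}} for all t ≥ 2, x ∈ ℝ². Then the energy E(t) = (1/2)∫_{ℝ²}(|∂_t u|² + |∇_x u|²)dx satisfies E(t) ≤ C' ε^{1/(1-μ)} (log t)^{-(1-2μ)/(2-2μ)} for all t ≥ 2, with a constant C' depending only on C, R, μ, provided ε is small enough that ε^{1/(1-μ)}(log t)^{1/(2-2μ)} < t for all t ≥ 2. -/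

import Mathlib

open MeasureTheory

/-- partial derivative in `t` -/
noncomputable def pt (ψ : ℝ → ℝ → ℝ → ℂ) : ℝ → ℝ → ℝ → ℂ :=
  fun t x₁ x₂ => deriv (fun s => ψ s x₁ x₂) t

/-- partial derivative in `x₁` -/
noncomputable def p1 (ψ : ℝ → ℝ → ℝ → ℂ) : ℝ → ℝ → ℝ → ℂ :=
  fun t x₁ x₂ => deriv (fun s => ψ t s x₂) x₁

/-- partial derivative in `x₂` -/
noncomputable def p2 (ψ : ℝ → ℝ → ℝ → ℂ) : ℝ → ℝ → ℝ → ℂ :=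
  fun t x₁ x₂ => deriv (fun s => ψ t x₁ s) x₂

/-- squared length of the space-time gradient -/
noncomputable def gradSq (u : ℝ → ℝ → ℝ → ℂ) (t x₁ x₂ : ℝ) : ℝ :=
  ‖pt u t x₁ x₂‖^2 + ‖p1 u t x₁ x₂‖^2 + ‖p2 u t x₁ x₂‖^2

set_option maxHeartbeats 4000000 in
/-- energy decay under the pointwise bound
|∇u| ≤ C t^{-1/2} min{(log t)^{-1/2}, ε⟨t-|x|⟩^{μ-1}} and finite propagation. -/
theorem energy_decay_dissipative
    (μ ε R C : ℝ) (hμ0 : 0 < μ) (hμ1 : μ < 1/10)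
    (hε : 0 < ε) (hR : 0 < R) (hC : 0 < C)
    (u : ℝ → ℝ → ℝ → ℂ)
    (hmeas : ∀ t : ℝ, Measurable (fun p : ℝ × ℝ => gradSq u t p.1 p.2))
    (hsupp : ∀ t : ℝ, 2 ≤ t → ∀ x₁ x₂ : ℝ,
      t + R ≤ Real.sqrt (x₁^2 + x₂^2) → u t x₁ x₂ = 0 ∧ gradSq u t x₁ x₂ = 0)
    (hbound : ∀ t : ℝ, 2 ≤ t → ∀ x₁ x₂ : ℝ,
      Real.sqrt (gradSq u t x₁ x₂)
        ≤ C * t ^ (-(1:ℝ)/2) *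
          min ((Real.log t) ^ (-(1:ℝ)/2))
              (ε * (Real.sqrt (1 + (t - Real.sqrt (x₁^2 + x₂^2))^2)) ^ (μ - 1)))
    (hsmall : ∀ t : ℝ, 2 ≤ t →
      ε ^ ((1:ℝ)/(1 - μ)) * (Real.log t) ^ ((1:ℝ)/(2 - 2*μ)) < t) :
    ∃ C' : ℝ, 0 < C' ∧ ∀ t : ℝ, 2 ≤ t →
      (1/2) * (∫ p : ℝ × ℝ, gradSq u t p.1 p.2)
        ≤ C' * ε ^ ((1:ℝ)/(1 - μ)) *
            (Real.log t) ^ (-((1 - 2*μ)/(2 - 2*μ))) := by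
  have h1μ : (0:ℝ) < 1 - μ := by linarith
  have h2μ : (0:ℝ) < 1 - 2*μ := by linarith
  set q : ℝ := (1:ℝ)/(1 - μ) with hq
  set P : ℝ := (1:ℝ)/(2 - 2*μ) with hP
  set K : ℝ := (2 * (max R 1)^2) ^ (1 - μ) with hK
  have hmax1 : (1:ℝ) ≤ max R 1 := le_max_right R 1
  have hmaxR : R ≤ max R 1 := le_max_left R 1
  have hKpos : 0 < K := Real.rpow_pos_of_pos (by positivity) _
  set C' : ℝ := Real.pi * (1 + R/2) * C^2 * (1 + K/(1 - 2*μ)) with hC'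
  have hC'pos : 0 < C' := by
    have := Real.pi_pos
    positivity
  refine ⟨C', hC'pos, ?_⟩
  intro t ht
  have ht0 : (0:ℝ) < t := by linarith
  have hL : 0 < Real.log t := Real.log_pos (by linarith)
  set L := Real.log t with hLdef
  set a := t + R with ha
  have ha0 : (0:ℝ) < a := by linarith
  set m : ℝ := ε ^ q * L ^ P with hm
  have hm0 : 0 < m := by positivity
  have hmt : m < t := hsmall t ht
  have hma : m < a := by linarith
  set M : ℝ := C^2 * t^(-(1:ℝ)) * L^(-(1:ℝ)) with hM
  have hMpos : 0 < M := by positivity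
  set D : ℝ := C^2 * t^(-(1:ℝ)) * (ε^2 * K) with hD
  have hDpos : 0 < D := by positivity
  set f : ℝ → ℝ := fun r => if r < a then
      C^2 * t^(-(1:ℝ)) * (min (L ^ (-(1:ℝ)/2)) (ε * (Real.sqrt (1 + (t - r)^2)) ^ (μ - 1)))^2
    else 0 with hf
  have hfnonneg : ∀ r, 0 ≤ f r := by
    intro r
    rw [hf]
    dsimp only
    split_ifs with h
    · positivity
    · exact le_rfl
  -- min is nonneg
  have hminnn : ∀ r : ℝ, 0 ≤ min (L ^ (-(1:ℝ)/2)) (ε * (Real.sqrt (1 + (t - r)^2)) ^ (μ - 1)) := by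
    intro r
    apply le_min
    · positivity
    · have : (0:ℝ) < Real.sqrt (1 + (t - r)^2) := Real.sqrt_pos.mpr (by positivity)
      positivity
  have hfM : ∀ r, f r ≤ M := by
    intro r
    rw [hf]
    dsimp only
    split_ifs with h
    · rw [hM]
      have h1 : (min (L ^ (-(1:ℝ)/2)) (ε * (Real.sqrt (1 + (t - r)^2)) ^ (μ - 1)))^2
          ≤ (L ^ (-(1:ℝ)/2))^2 := pow_le_pow_left₀ (hminnn r) (min_le_left _ _) 2
      have h2 : (L ^ (-(1:ℝ)/2))^2 = L^(-(1:ℝ)) := by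
        rw [← Real.rpow_natCast (L ^ (-(1:ℝ)/2)) 2, ← Real.rpow_mul hL.le]
        norm_num
      rw [h2] at h1
      have : (0:ℝ) ≤ C^2 * t^(-(1:ℝ)) := by positivity
      exact mul_le_mul_of_nonneg_left h1 this
    · exact hMpos.le
  have hfD : ∀ r, r ≤ a - m → f r ≤ D * (a - r)^(2*μ-2) := by
    intro r hr
    have har : 0 < a - r := by linarith
    have hs0 : (0:ℝ) < 1 + (t - r)^2 := by positivity
    have hsq : (0:ℝ) < Real.sqrt (1 + (t - r)^2) := Real.sqrt_pos.mpr hs0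
    rw [hf]
    dsimp only
    rw [if_pos (by linarith : r < a)]
    have h1 : (min (L ^ (-(1:ℝ)/2)) (ε * (Real.sqrt (1 + (t - r)^2)) ^ (μ - 1)))^2
        ≤ (ε * (Real.sqrt (1 + (t - r)^2)) ^ (μ - 1))^2 :=
      pow_le_pow_left₀ (hminnn r) (min_le_right _ _) 2
    have h2 : (ε * (Real.sqrt (1 + (t - r)^2)) ^ (μ - 1))^2
        = ε^2 * (1 + (t - r)^2) ^ (μ - 1) := by
      rw [mul_pow]
      congr 1
      rw [← Real.rpow_natCast ((Real.sqrt (1 + (t - r)^2)) ^ (μ - 1)) 2,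
        ← Real.rpow_mul (Real.sqrt_nonneg _)]
      rw [show (μ - 1) * (2:ℕ) = 2 * (μ - 1) by push_cast; ring]
      rw [Real.rpow_mul (Real.sqrt_nonneg _)]
      rw [show ((Real.sqrt (1 + (t - r)^2)) ^ (2:ℝ)) = 1 + (t - r)^2 by
        rw [show (2:ℝ) = ((2:ℕ):ℝ) by norm_num, Real.rpow_natCast, Real.sq_sqrt hs0.le]]
    have h3 : (1 + (t - r)^2) ^ (μ - 1) ≤ K * (a - r)^(2*μ-2) := by
      have hbase : (a - r)^2 ≤ 2 * (max R 1)^2 * (1 + (t - r)^2) := by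
        have h4 : a - r = R + (t - r) := by rw [ha]; ring
        rw [h4]
        have hA : R^2 ≤ (max R 1)^2 := pow_le_pow_left₀ hR.le hmaxR 2
        have hm2 : (1:ℝ) ≤ (max R 1)^2 := by nlinarith [hmax1]
        have hB : (t - r)^2 ≤ (max R 1)^2 * (t - r)^2 := by
          nlinarith [hm2, sq_nonneg (t - r)]
        nlinarith [sq_nonneg (R - (t - r)), hA, hB]
      have hb0 : (0:ℝ) < (a - r)^2 := by positivity
      have h5 : (2 * (max R 1)^2 * (1 + (t - r)^2)) ^ (μ - 1) ≤ ((a - r)^2) ^ (μ - 1) :=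
        Real.rpow_le_rpow_of_nonpos hb0 hbase (by linarith)
      have h6 : (2 * (max R 1)^2 * (1 + (t - r)^2)) ^ (μ - 1)
          = (2 * (max R 1)^2) ^ (μ - 1) * (1 + (t - r)^2) ^ (μ - 1) :=
        Real.mul_rpow (by positivity) hs0.le
      have h7 : ((a - r)^2) ^ (μ - 1) = (a - r)^(2*μ-2) := by
        rw [← Real.rpow_natCast (a - r) 2, ← Real.rpow_mul har.le]
        norm_num
        ring_nf
      have h8 : K * (2 * (max R 1)^2) ^ (μ - 1) = 1 := by
        rw [hK, ← Real.rpow_add (by positivity : (0:ℝ) < 2 * (max R 1)^2)]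
        norm_num
      calc (1 + (t - r)^2) ^ (μ - 1)
          = K * ((2 * (max R 1)^2) ^ (μ - 1) * (1 + (t - r)^2) ^ (μ - 1)) := by
            rw [← mul_assoc, h8, one_mul]
        _ = K * (2 * (max R 1)^2 * (1 + (t - r)^2)) ^ (μ - 1) := by rw [h6]
        _ ≤ K * ((a - r)^2) ^ (μ - 1) := by
            apply mul_le_mul_of_nonneg_left h5 hKpos.le
        _ = K * (a - r)^(2*μ-2) := by rw [h7]
    calc C^2 * t^(-(1:ℝ)) * (min _ _)^2
        ≤ C^2 * t^(-(1:ℝ)) * (ε^2 * (1 + (t - r)^2) ^ (μ - 1)) := by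
          rw [← h2]; exact mul_le_mul_of_nonneg_left h1 (by positivity)
      _ ≤ C^2 * t^(-(1:ℝ)) * (ε^2 * (K * (a - r)^(2*μ-2))) := by
          apply mul_le_mul_of_nonneg_left _ (by positivity)
          exact mul_le_mul_of_nonneg_left h3 (by positivity)
      _ = D * (a - r)^(2*μ-2) := by rw [hD]; ring
  have hfm : Measurable f := by
    rw [hf]
    apply Measurable.ite (measurableSet_lt measurable_id measurable_const) ?_ measurable_const
    fun_prop
  have hrm : Measurable (fun x : ℝ × ℝ => Real.sqrt (x.1^2 + x.2^2)) :=
    (Real.continuous_sqrt.comp ((continuous_fst.pow 2).add (continuous_snd.pow 2))).measurable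
  set F : ℝ × ℝ → ℝ := fun x => f (Real.sqrt (x.1^2 + x.2^2)) with hF
  have hFm : Measurable F := hfm.comp hrm
  have hgF : ∀ x : ℝ × ℝ, gradSq u t x.1 x.2 ≤ F x := by
    intro x
    have hg0 : 0 ≤ gradSq u t x.1 x.2 := by unfold gradSq; positivity
    by_cases hr : Real.sqrt (x.1^2 + x.2^2) < a
    · have hb := hbound t ht x.1 x.2
      have h2 := pow_le_pow_left₀ (Real.sqrt_nonneg _) hb 2
      rw [Real.sq_sqrt hg0] at h2
      rw [hF]
      dsimp only
      rw [hf]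
      dsimp only
      rw [if_pos hr]
      calc gradSq u t x.1 x.2
          ≤ (C * t ^ (-(1:ℝ)/2) * min (L ^ (-(1:ℝ)/2))
              (ε * (Real.sqrt (1 + (t - Real.sqrt (x.1^2 + x.2^2))^2)) ^ (μ - 1)))^2 := h2
        _ = C^2 * t^(-(1:ℝ)) * (min (L ^ (-(1:ℝ)/2))
              (ε * (Real.sqrt (1 + (t - Real.sqrt (x.1^2 + x.2^2))^2)) ^ (μ - 1)))^2 := by
            rw [mul_pow, mul_pow]
            congr 2
            rw [← Real.rpow_natCast (t ^ (-(1:ℝ)/2)) 2, ← Real.rpow_mul ht0.le]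
            norm_num
    · have h2 := (hsupp t ht x.1 x.2 (not_lt.mp hr)).2
      rw [h2, hF]
      dsimp only
      rw [hf]
      dsimp only
      rw [if_neg hr]
  -- integrability of F
  have hFint : Integrable F := by
    apply Integrable.mono' (g := (Set.Icc (-a) a ×ˢ Set.Icc (-a) a).indicator fun _ => M)
    · rw [integrable_indicator_iff (measurableSet_Icc.prod measurableSet_Icc)]
      refine integrableOn_const ?_
      rw [show (volume : Measure (ℝ×ℝ)) = Measure.prod volume volume from rfl,
        Measure.prod_prod, Real.volume_Icc]
      exact (ENNReal.mul_lt_top ENNReal.ofReal_lt_top ENNReal.ofReal_lt_top).ne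
    · exact hFm.aestronglyMeasurable
    · apply Filter.Eventually.of_forall
      intro x
      by_cases hx : x ∈ Set.Icc (-a) a ×ˢ Set.Icc (-a) a
      · rw [Set.indicator_of_mem hx, hF]
        dsimp only
        rw [Real.norm_eq_abs, abs_of_nonneg (hfnonneg _)]
        exact hfM _
      · rw [Set.indicator_of_notMem hx]
        have h2 : a^2 ≤ x.1^2 + x.2^2 := by
          by_contra hcon
          push_neg at hcon
          apply hx
          constructor
          · constructor
            · nlinarith [sq_nonneg (x.1 + a), sq_nonneg x.2]
            · nlinarith [sq_nonneg (x.1 - a), sq_nonneg x.2]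
          · constructor
            · nlinarith [sq_nonneg (x.2 + a), sq_nonneg x.1]
            · nlinarith [sq_nonneg (x.2 - a), sq_nonneg x.1]
        have hra : a ≤ Real.sqrt (x.1^2 + x.2^2) := by
          calc a = Real.sqrt (a^2) := (Real.sqrt_sq ha0.le).symm
            _ ≤ _ := Real.sqrt_le_sqrt h2
        rw [hF]
        dsimp only
        rw [hf]
        dsimp only
        rw [if_neg (not_lt.mpr hra)]
        simp
  have hmono : ∫ p : ℝ × ℝ, gradSq u t p.1 p.2 ≤ ∫ p, F p :=
    integral_mono_of_nonneg
      (Filter.Eventually.of_forall fun x => by unfold gradSq; positivity)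
      hFint (Filter.Eventually.of_forall hgF)
  -- polar coordinates
  have hpolar : ∫ p : ℝ × ℝ, F p = (∫ r in Set.Ioi (0:ℝ), r * f r) * (2 * Real.pi) := by
    rw [← integral_comp_polarCoord_symm F]
    have htar : polarCoord.target = Set.Ioi (0:ℝ) ×ˢ Set.Ioo (-Real.pi) Real.pi := rfl
    rw [htar]
    have h1 : Set.EqOn (fun p : ℝ × ℝ => p.1 • F (polarCoord.symm p))
        (fun p : ℝ × ℝ => (p.1 * f p.1) * 1)
        (Set.Ioi (0:ℝ) ×ˢ Set.Ioo (-Real.pi) Real.pi) := by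
      rintro ⟨r, θ⟩ ⟨hr, -⟩
      simp only [smul_eq_mul, mul_one]
      congr 1
      rw [hF]
      dsimp only
      congr 1
      rw [polarCoord_symm_apply]
      dsimp only
      rw [show (r * Real.cos θ)^2 + (r * Real.sin θ)^2 = r^2 by
        have := Real.sin_sq_add_cos_sq θ; nlinarith [this]]
      exact Real.sqrt_sq (le_of_lt hr)
    rw [setIntegral_congr_fun (measurableSet_Ioi.prod measurableSet_Ioo) h1]
    rw [show (volume : Measure (ℝ×ℝ)) = Measure.prod volume volume from rfl,
      ← Measure.prod_restrict, integral_prod_mul (fun r => r * f r) (fun _ => (1:ℝ))]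
    congr 1
    simp [Real.volume_Ioo]
    rw [max_eq_left (by positivity)]
    ring
  -- 1D integral estimates
  have hgmble : Measurable fun r : ℝ => r * f r := measurable_id.mul hfm
  have hIoo : IntegrableOn (fun r : ℝ => r * f r) (Set.Ioo 0 a) := by
    apply Measure.integrableOn_of_bounded (M := a * M)
    · rw [Real.volume_Ioo]; exact ENNReal.ofReal_ne_top
    · exact hgmble.aestronglyMeasurable
    · apply (ae_restrict_iff' measurableSet_Ioo).2
      apply Filter.Eventually.of_forall
      intro r hr
      rw [Real.norm_eq_abs, abs_of_nonneg (mul_nonneg hr.1.le (hfnonneg r))]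
      exact mul_le_mul hr.2.le (hfM r) (hfnonneg r) ha0.le
  have hzero : Set.EqOn (fun r : ℝ => r * f r) 0 (Set.Ici a) := by
    intro r hr
    have : ¬ r < a := not_lt.mpr hr
    simp [hf, this]
  have hsplit0 : ∫ r in Set.Ioi (0:ℝ), r * f r = ∫ r in Set.Ioo 0 a, r * f r := by
    rw [← Set.Ioo_union_Ici_eq_Ioi ha0]
    rw [setIntegral_union (by
        rw [Set.disjoint_left]; intro x hx h2; exact absurd hx.2 (not_lt.mpr h2))
      measurableSet_Ici hIoo
      ((integrableOn_congr_fun hzero measurableSet_Ici).2 (integrableOn_zero))]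
    rw [setIntegral_congr_fun measurableSet_Ici hzero]
    simp
  have ham : 0 < a - m := by linarith
  have hsub1 : Set.Ioo (0:ℝ) (a - m) ⊆ Set.Ioo 0 a := Set.Ioo_subset_Ioo le_rfl (by linarith)
  have hsub2 : Set.Ico (a - m) a ⊆ Set.Ioo 0 a := fun x hx => ⟨by linarith [hx.1], hx.2⟩
  have hsplit : ∫ r in Set.Ioo (0:ℝ) a, r * f r
      = (∫ r in Set.Ioo (0:ℝ) (a - m), r * f r) + ∫ r in Set.Ico (a - m) a, r * f r := by
    rw [← Set.Ioo_union_Ico_eq_Ioo ham (by linarith : a - m ≤ a)]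
    rw [setIntegral_union (by
        rw [Set.disjoint_left]; intro x hx h2; exact absurd hx.2 (not_lt.mpr h2.1))
      measurableSet_Ico (hIoo.mono_set hsub1) (hIoo.mono_set hsub2)]
  have hP2 : ∫ r in Set.Ico (a - m) a, r * f r ≤ a * M * m := by
    calc ∫ r in Set.Ico (a - m) a, r * f r ≤ ∫ _ in Set.Ico (a - m) a, a * M := by
          apply setIntegral_mono_on (hIoo.mono_set hsub2)
            (integrableOn_const (by rw [Real.volume_Ico]; exact ENNReal.ofReal_ne_top))
            measurableSet_Ico
          intro r hr
          exact mul_le_mul hr.2.le (hfM r) (hfnonneg r) ha0.le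
      _ = a * M * m := by
          rw [setIntegral_const, measureReal_def, Real.volume_Ico, smul_eq_mul,
            ENNReal.toReal_ofReal (by linarith : 0 ≤ a - (a - m))]
          ring_nf
  have hrpowm : ∀ r ∈ Set.Ioo (0:ℝ) (a - m), (a - r)^(2*μ-2) ≤ m^(2*μ-2) := by
    intro r hr
    exact Real.rpow_le_rpow_of_nonpos hm0 (by linarith [hr.2]) (by linarith)
  have hbnd_int : IntegrableOn (fun r : ℝ => a * (D * (a - r)^(2*μ-2))) (Set.Ioo 0 (a - m)) := by
    apply Measure.integrableOn_of_bounded (M := a * (D * m^(2*μ-2)))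
    · rw [Real.volume_Ioo]; exact ENNReal.ofReal_ne_top
    · apply Measurable.aestronglyMeasurable
      fun_prop
    · apply (ae_restrict_iff' measurableSet_Ioo).2
      apply Filter.Eventually.of_forall
      intro r hr
      have h1 : (0:ℝ) < a - r := by linarith [hr.2]
      rw [Real.norm_eq_abs, abs_of_nonneg (by positivity)]
      have := hrpowm r hr
      have h2 : D * (a - r)^(2*μ-2) ≤ D * m^(2*μ-2) := mul_le_mul_of_nonneg_left this hDpos.le
      exact mul_le_mul_of_nonneg_left h2 ha0.le
  have hP1 : ∫ r in Set.Ioo (0:ℝ) (a - m), r * f r ≤ a * D * (m^(2*μ-1) / (1 - 2*μ)) := by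
    have step1 : ∫ r in Set.Ioo (0:ℝ) (a - m), r * f r
        ≤ ∫ r in Set.Ioo (0:ℝ) (a - m), a * (D * (a - r)^(2*μ-2)) := by
      apply setIntegral_mono_on (hIoo.mono_set hsub1) hbnd_int measurableSet_Ioo
      intro r hr
      have h1 : (0:ℝ) < a - r := by linarith [hr.2]
      exact mul_le_mul (by linarith [hr.2]) (hfD r hr.2.le) (hfnonneg r) ha0.le
    have step2 : ∫ r in Set.Ioo (0:ℝ) (a - m), a * (D * (a - r)^(2*μ-2))
        = (a * D) * ∫ r in Set.Ioo (0:ℝ) (a - m), (a - r)^(2*μ-2) := by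
      rw [← integral_const_mul]
      congr 1
      funext r
      ring
    have step3 : ∫ r in Set.Ioo (0:ℝ) (a - m), (a - r)^(2*μ-2) ≤ m^(2*μ-1) / (1 - 2*μ) := by
      have e1 : ∫ r in Set.Ioo (0:ℝ) (a - m), (a - r)^(2*μ-2)
          = ∫ r in (0:ℝ)..(a - m), (a - r)^(2*μ-2) := by
        rw [intervalIntegral.integral_of_le ham.le, integral_Ioc_eq_integral_Ioo]
      have e2 : ∫ r in (0:ℝ)..(a - m), (a - r)^(2*μ-2) = ∫ s in m..a, s^(2*μ-2) := by
        rw [intervalIntegral.integral_comp_sub_left (fun s => s^(2*μ-2)) a]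
        norm_num
      have e3 : ∫ s in m..a, s^(2*μ-2) = (a^(2*μ-1) - m^(2*μ-1)) / (2*μ-1) := by
        rw [integral_rpow (Or.inr ⟨fun h => by linarith,
          Set.notMem_uIcc_of_lt hm0 ha0⟩)]
        norm_num
        ring_nf
      rw [e1, e2, e3]
      have hapos : (0:ℝ) < a^(2*μ-1) := Real.rpow_pos_of_pos ha0 _
      have heq : (a^(2*μ-1) - m^(2*μ-1)) / (2*μ-1) = (m^(2*μ-1) - a^(2*μ-1)) / (1 - 2*μ) := by
        rw [div_eq_div_iff (by linarith) (by linarith)]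
        ring
      rw [heq]
      exact (div_le_div_iff_of_pos_right (by linarith)).mpr (by linarith)
    calc ∫ r in Set.Ioo (0:ℝ) (a - m), r * f r
        ≤ (a * D) * ∫ r in Set.Ioo (0:ℝ) (a - m), (a - r)^(2*μ-2) := by rw [← step2]; exact step1
      _ ≤ a * D * (m^(2*μ-1) / (1 - 2*μ)) :=
          mul_le_mul_of_nonneg_left step3 (by positivity)
  -- combine
  have hI : ∫ r in Set.Ioi (0:ℝ), r * f r
      ≤ a * D * (m^(2*μ-1) / (1 - 2*μ)) + a * M * m := by
    rw [hsplit0, hsplit]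
    exact add_le_add hP1 hP2
  -- final arithmetic
  have h22 : (2:ℝ) - 2*μ ≠ 0 := by linarith
  have hexp1 : -((1 - 2*μ)/(2 - 2*μ)) = P - 1 := by
    rw [hP]
    field_simp
    ring
  have hMm : M * m = C^2 * t^(-(1:ℝ)) * (ε^q * L^(P-1)) := by
    have e1 : L^(-(1:ℝ)) * L^P = L^(P-1) := by
      rw [← Real.rpow_add hL]; ring_nf
    calc M * m = C^2 * t^(-(1:ℝ)) * (ε^q * (L^(-(1:ℝ)) * L^P)) := by rw [hM, hm]; ring
      _ = C^2 * t^(-(1:ℝ)) * (ε^q * L^(P-1)) := by rw [e1]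
  have hDm : D * m^(2*μ-1) = C^2 * t^(-(1:ℝ)) * K * (ε^q * L^(P-1)) := by
    have e0 : m^(2*μ-1) = ε^(q*(2*μ-1)) * L^(P*(2*μ-1)) := by
      rw [hm, Real.mul_rpow (by positivity) (by positivity),
        ← Real.rpow_mul hε.le, ← Real.rpow_mul hL.le]
    have e1 : ε^2 * ε^(q*(2*μ-1)) = ε^q := by
      rw [show (ε:ℝ)^2 = ε^((2:ℕ):ℝ) by rw [Real.rpow_natCast],
        ← Real.rpow_add hε]
      congr 1
      rw [hq]
      field_simp
      ring
    have e2 : (P*(2*μ-1) : ℝ) = P - 1 := by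
      rw [hP]; field_simp; ring
    calc D * m^(2*μ-1) = C^2 * t^(-(1:ℝ)) * K * (ε^2 * ε^(q*(2*μ-1)) * L^(P*(2*μ-1))) := by
          rw [hD, e0]; ring
      _ = C^2 * t^(-(1:ℝ)) * K * (ε^q * L^(P-1)) := by rw [e1, e2]
  have hat : a * t^(-(1:ℝ)) ≤ 1 + R/2 := by
    rw [Real.rpow_neg_one, ha, mul_inv_le_iff₀ ht0]
    nlinarith
  have hIfinal : (1/2) * (∫ p : ℝ × ℝ, gradSq u t p.1 p.2)
      ≤ Real.pi * (a * D * (m^(2*μ-1)/(1 - 2*μ)) + a * M * m) := by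
    calc (1/2) * (∫ p : ℝ × ℝ, gradSq u t p.1 p.2) ≤ (1/2) * ∫ p, F p := by linarith
      _ = (1/2) * ((∫ r in Set.Ioi (0:ℝ), r * f r) * (2 * Real.pi)) := by rw [hpolar]
      _ = Real.pi * (∫ r in Set.Ioi (0:ℝ), r * f r) := by ring
      _ ≤ Real.pi * (a * D * (m^(2*μ-1)/(1 - 2*μ)) + a * M * m) :=
          mul_le_mul_of_nonneg_left hI Real.pi_pos.le
  rw [hexp1]
  refine hIfinal.trans ?_
  have key : a * D * (m^(2*μ-1)/(1 - 2*μ)) + a * M * m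
      = (a * t^(-(1:ℝ))) * (C^2 * (K/(1 - 2*μ) + 1)) * (ε^q * L^(P-1)) := by
    calc a * D * (m^(2*μ-1)/(1 - 2*μ)) + a * M * m
        = a * (D * m^(2*μ-1)) * (1/(1 - 2*μ)) + a * (M * m) := by ring
      _ = a * (C^2 * t^(-(1:ℝ)) * K * (ε^q * L^(P-1))) * (1/(1 - 2*μ))
          + a * (C^2 * t^(-(1:ℝ)) * (ε^q * L^(P-1))) := by rw [hDm, hMm]
      _ = (a * t^(-(1:ℝ))) * (C^2 * (K/(1 - 2*μ) + 1)) * (ε^q * L^(P-1)) := by ring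
  calc Real.pi * (a * D * (m^(2*μ-1)/(1 - 2*μ)) + a * M * m)
      = Real.pi * ((a * t^(-(1:ℝ))) * (C^2 * (K/(1 - 2*μ) + 1)) * (ε^q * L^(P-1))) := by
        rw [key]
    _ ≤ Real.pi * ((1 + R/2) * (C^2 * (K/(1 - 2*μ) + 1)) * (ε^q * L^(P-1))) := by
        apply mul_le_mul_of_nonneg_left ?_ Real.pi_pos.le
        apply mul_le_mul_of_nonneg_right
          (mul_le_mul_of_nonneg_right hat (by positivity)) (by positivity)
    _ = C' * ε^q * L^(P-1) := by rw [hC']; ring
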